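/- Suppose operators T_{f_j}^{(k)} (j = 1,...,2n) on finite-dimensional Hilbert spaces satisfy ‖[T_f^{(k)},T_g^{(k)}]‖ ≤ C(f,g)/k for all pairs among the f_j, for all k ≥ 1. Then the Nambu generalized commutator satisfies ‖[T_{f₁}^{(k)},...,T_{f_{2n}}^{(k)}]‖ = O(1/kⁿ) as k→∞. -/

import Mathlib

open Filter Asymptotics

namespace Stmt9Aux

def idx (n : ℕ) (j : Fin n) (b : Bool) : Fin (2*n) :=
  ⟨2*j.1 + b.toNat, by have := j.2; cases b <;> simp [Bool.toNat] <;> omega⟩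

lemma idx_inj {n : ℕ} {j j' : Fin n} {b b' : Bool} (h : idx n j b = idx n j' b') :
    j = j' ∧ b = b' := by
  have hv : 2*j.1 + b.toNat = 2*j'.1 + b'.toNat := congrArg Fin.val h
  cases b <;> cases b' <;> simp [Bool.toNat] at hv ⊢ <;> [skip; omega; omega; skip] <;>
    exact Fin.ext (by omega)

lemma idx_ne {n : ℕ} (j : Fin n) : idx n j false ≠ idx n j true := by
  intro h; exact Bool.false_ne_true (idx_inj h).2

lemma idx_cover {n : ℕ} (x : Fin (2*n)) : ∃ j b, x = idx n j b := by
  have hx := x.2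
  refine ⟨⟨x.1/2, by omega⟩, decide (x.1 % 2 = 1), ?_⟩
  apply Fin.ext
  by_cases h : x.1 % 2 = 1 <;> simp [idx, h, Bool.toNat] <;> omega

/-- The factor permutations. -/
def sw {n : ℕ} (ε : Fin n → Bool) (j : Fin n) : Equiv.Perm (Fin (2*n)) :=
  if ε j then Equiv.swap (idx n j false) (idx n j true) else 1

lemma sw_commute {n : ℕ} (ε : Fin n → Bool) {j j' : Fin n} (h : j ≠ j') :
    Commute (sw ε j) (sw ε j') := by
  unfold sw
  by_cases h1 : ε j
  · by_cases h2 : ε j'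
    · rw [if_pos h1, if_pos h2]
      apply Equiv.Perm.Disjoint.commute
      intro x
      by_cases hx : x = idx n j false ∨ x = idx n j true
      · right
        refine Equiv.swap_apply_of_ne_of_ne ?_ ?_ <;> rintro rfl <;>
          rcases hx with hx | hx <;> exact h ((idx_inj hx).1).symm
      · left
        push_neg at hx
        exact Equiv.swap_apply_of_ne_of_ne hx.1 hx.2
    · rw [if_neg h2]; exact Commute.one_right _
  · rw [if_neg h1]; exact Commute.one_left _

lemma sw_pairwise {n : ℕ} (ε : Fin n → Bool) (s : Finset (Fin n)) :
    (↑s : Set (Fin n)).Pairwise fun a b => Commute (sw ε a) (sw ε b) :=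
  fun a _ b _ hab => sw_commute ε hab

noncomputable def gswap {n : ℕ} (ε : Fin n → Bool) : Equiv.Perm (Fin (2*n)) :=
  Finset.univ.noncommProd (sw ε) (sw_pairwise ε _)

lemma sw_apply {n : ℕ} (ε : Fin n → Bool) (a j₀ : Fin n) (b : Bool) :
    sw ε a (idx n j₀ b) = if a = j₀ ∧ ε a then idx n j₀ (!b) else idx n j₀ b := by
  unfold sw
  by_cases haj : a = j₀
  · subst haj
    by_cases hε : ε a
    · simp only [hε, and_true, if_pos, if_pos rfl]
      cases b
      · exact Equiv.swap_apply_left _ _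
      · exact Equiv.swap_apply_right _ _
    · simp [hε]
  · by_cases hε : ε a
    · rw [if_pos hε, if_neg (fun h => haj h.1)]
      refine Equiv.swap_apply_of_ne_of_ne ?_ ?_ <;>
        · intro h; exact haj ((idx_inj h).1.symm)
    · simp [hε, haj]

lemma noncommProd_sw_apply {n : ℕ} (ε : Fin n → Bool) (s : Finset (Fin n)) (j₀ : Fin n) (b : Bool) :
    (s.noncommProd (sw ε) (sw_pairwise ε s)) (idx n j₀ b) =
      if j₀ ∈ s ∧ ε j₀ then idx n j₀ (!b) else idx n j₀ b := by
  induction s using Finset.induction with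
  | empty => simp
  | @insert a s ha ih =>
    rw [Finset.noncommProd_insert_of_notMem _ _ _ _ ha, Equiv.Perm.mul_apply, ih]
    by_cases hm : j₀ ∈ s ∧ ε j₀
    · rw [if_pos hm, sw_apply, if_neg, if_pos ⟨Finset.mem_insert_of_mem hm.1, hm.2⟩]
      rintro ⟨rfl, -⟩; exact ha hm.1
    · rw [if_neg hm, sw_apply]
      by_cases haj : a = j₀ ∧ ε a
      · rw [if_pos haj, if_pos ⟨haj.1 ▸ Finset.mem_insert_self a s, haj.1 ▸ haj.2⟩]
      · rw [if_neg haj, if_neg]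
        rintro ⟨h1, h2⟩
        rcases Finset.mem_insert.1 h1 with h | h
        · exact haj ⟨h.symm, h.symm ▸ h2⟩
        · exact hm ⟨h, h2⟩

lemma gswap_apply {n : ℕ} (ε : Fin n → Bool) (j : Fin n) (b : Bool) :
    gswap ε (idx n j b) = if ε j then idx n j (!b) else idx n j b := by
  rw [gswap, noncommProd_sw_apply]; simp

lemma gswap_invol {n : ℕ} (ε : Fin n → Bool) : gswap ε * gswap ε = 1 := by
  ext x
  obtain ⟨j, b, rfl⟩ := idx_cover x
  rw [Equiv.Perm.mul_apply]
  by_cases hε : ε j <;> simp [gswap_apply, hε]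

lemma sign_gswap {n : ℕ} (ε : Fin n → Bool) :
    (Equiv.Perm.sign (gswap ε) : ℤ) = ∏ j : Fin n, (if ε j then (-1:ℤ) else 1) := by
  rw [gswap, Finset.map_noncommProd _ _ _ Equiv.Perm.sign, Finset.noncommProd_eq_prod]
  push_cast
  refine Finset.prod_congr rfl fun j _ => ?_
  unfold sw
  by_cases hε : ε j <;> simp [hε, Equiv.Perm.sign_swap (idx_ne j)]

lemma pairProd {R : Type*} [Monoid R] : ∀ (n : ℕ) (f : Fin (2*n) → R),
    (List.ofFn f).prod = (List.ofFn fun j : Fin n => f (idx n j false) * f (idx n j true)).prod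
  | 0, f => by simp [List.ofFn_zero]
  | n+1, f => by
    have key : (List.ofFn f) = f ⟨0, by omega⟩ :: f ⟨1, by omega⟩ ::
        List.ofFn (fun i : Fin (2*n) => f ⟨i.1+2, by omega⟩) := by
      apply List.ext_getElem
      · simp
      · intro i h1 h2
        simp only [List.getElem_ofFn]
        match i with
        | 0 => rfl
        | 1 => rfl
        | (m+2) => simp only [List.getElem_cons_succ, List.getElem_ofFn]
    have es : ∀ (j : Fin n) (b : Bool),
        f (idx (n+1) j.succ b) = f ⟨(idx n j b).1 + 2, by have := (idx n j b).2; omega⟩ := by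
      intro j b
      congr 1; apply Fin.ext
      simp [idx, Fin.succ, Bool.toNat]; omega
    rw [key, List.prod_cons, List.prod_cons,
      pairProd n (fun i : Fin (2*n) => f ⟨i.1+2, by omega⟩), List.ofFn_succ, List.prod_cons,
      ← mul_assoc]
    simp only [es]
    rfl

lemma expand {R : Type*} [Ring R] : ∀ (n : ℕ) (a b : Fin n → R),
    ∑ ε : Fin n → Bool, (∏ j, if ε j then (-1:ℤ) else 1) •
      (List.ofFn fun j => if ε j then b j else a j).prod
    = (List.ofFn fun j => a j - b j).prod
  | 0, a, b => by simp
  | n+1, a, b => by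
    rw [← (Fin.consEquiv (fun _ : Fin (n+1) => Bool)).sum_comp, Fintype.sum_prod_type, Fintype.sum_bool]
    have key : ∀ (c : Bool) (ε : Fin n → Bool),
        (∏ j : Fin (n+1), if (Fin.consEquiv (fun _ : Fin (n+1) => Bool)) (c, ε) j then (-1:ℤ) else 1) •
          (List.ofFn fun j : Fin (n+1) =>
            if (Fin.consEquiv (fun _ : Fin (n+1) => Bool)) (c, ε) j then b j else a j).prod
        = ((if c then (-1:ℤ) else 1) * (∏ j : Fin n, if ε j then (-1:ℤ) else 1)) •
          ((if c then b 0 else a 0) *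
            (List.ofFn fun j : Fin n => if ε j then b j.succ else a j.succ).prod) := by
      intro c ε
      rw [Fin.prod_univ_succ, List.ofFn_succ, List.prod_cons]
      simp [Fin.consEquiv]
    simp only [key]
    rw [List.ofFn_succ, List.prod_cons, ← expand n (fun j => a j.succ) (fun j => b j.succ),
      sub_mul, Finset.mul_sum, Finset.mul_sum]
    simp only [if_true, if_false, neg_one_mul, neg_smul, one_mul, mul_smul_comm]
    rw [Finset.sum_neg_distrib, neg_add_eq_sub]
    simp only [Bool.false_eq_true, if_false, one_mul]

end Stmt9Aux

open Stmt9Aux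

/-- The Nambu generalized commutator. -/
noncomputable def nambu {R : Type*} [Ring R] {n : ℕ} (A : Fin n → R) : R :=
  ∑ σ : Equiv.Perm (Fin n), (Equiv.Perm.sign σ : ℤ) • (List.ofFn fun i => A (σ i)).prod

lemma nambu_eq {R : Type*} [Ring R] (n : ℕ) (A : Fin (2*n) → R) :
    nambu A = ∑ τ : {τ : Equiv.Perm (Fin (2*n)) // ∀ j : Fin n,
        τ (idx n j false) < τ (idx n j true)},
      (Equiv.Perm.sign τ.1 : ℤ) • (List.ofFn fun j : Fin n =>
        A (τ.1 (idx n j false)) * A (τ.1 (idx n j true)) -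
          A (τ.1 (idx n j true)) * A (τ.1 (idx n j false))).prod := by
  classical
  set ST := {τ : Equiv.Perm (Fin (2*n)) // ∀ j : Fin n,
      τ (idx n j false) < τ (idx n j true)} with hST
  set F : ST × (Fin n → Bool) → Equiv.Perm (Fin (2*n)) := fun p => p.1.1 * gswap p.2 with hF
  have happ : ∀ (τ : Equiv.Perm (Fin (2*n))) (ε : Fin n → Bool) (j : Fin n) (b : Bool),
      (τ * gswap ε) (idx n j b) = if ε j then τ (idx n j (!b)) else τ (idx n j b) := by
    intro τ ε j b
    rw [Equiv.Perm.mul_apply, gswap_apply, apply_ite τ]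
  -- the inverse map
  have hcondG : ∀ σ : Equiv.Perm (Fin (2*n)), ∀ j : Fin n,
      (σ * gswap (fun j => decide (σ (idx n j true) < σ (idx n j false)))) (idx n j false) <
      (σ * gswap (fun j => decide (σ (idx n j true) < σ (idx n j false)))) (idx n j true) := by
    intro σ j
    rw [happ, happ]
    simp only [decide_eq_true_eq]
    by_cases h : σ (idx n j true) < σ (idx n j false)
    · simp only [if_pos h, Bool.not_false, Bool.not_true]
      exact h
    · simp only [if_neg h]
      have hne : σ (idx n j false) ≠ σ (idx n j true) :=
        fun he => idx_ne j (σ.injective he)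
      exact lt_of_le_of_ne (not_lt.1 h) hne
  set G : Equiv.Perm (Fin (2*n)) → ST × (Fin n → Bool) := fun σ =>
    (⟨σ * gswap (fun j => decide (σ (idx n j true) < σ (idx n j false))), hcondG σ⟩,
      fun j => decide (σ (idx n j true) < σ (idx n j false))) with hG
  have hcancel : ∀ (σ : Equiv.Perm (Fin (2*n))) (ε : Fin n → Bool),
      (σ * gswap ε) * gswap ε = σ := by
    intro σ ε
    rw [mul_assoc, gswap_invol, mul_one]
  have hεf : ∀ (τ : ST) (ε : Fin n → Bool),
      (fun j => decide ((τ.1 * gswap ε) (idx n j true) < (τ.1 * gswap ε) (idx n j false))) = ε := by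
    intro τ ε
    funext j
    rcases Bool.dichotomy (ε j) with hε | hε
    · rw [hε]
      rw [happ, happ, hε, if_neg (by simp), if_neg (by simp)]
      exact decide_eq_false (not_lt.2 (le_of_lt (τ.2 j)))
    · rw [hε]
      rw [happ, happ, hε, if_pos rfl, if_pos rfl]
      exact decide_eq_true (by exact τ.2 j)
  have hFbij : Function.Bijective F := by
    apply Function.bijective_iff_has_inverse.mpr
    refine ⟨G, ?_, ?_⟩
    · intro p
      obtain ⟨τ, ε⟩ := p
      have h1 := hεf τ ε
      simp only [hG, hF]
      refine Prod.ext (Subtype.ext ?_) ?_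
      · simp only [h1]
        exact hcancel τ.1 ε
      · simp only [h1]
    · intro σ
      simp only [hG, hF]
      exact hcancel σ _
  have hsum := Function.Bijective.sum_comp hFbij
    (fun σ => (Equiv.Perm.sign σ : ℤ) • (List.ofFn fun i => A (σ i)).prod)
  rw [nambu, ← hsum, Fintype.sum_prod_type]
  refine Finset.sum_congr rfl fun τ _ => ?_
  -- inner sum over ε
  have hterm : ∀ ε : Fin n → Bool,
      (Equiv.Perm.sign (F (τ, ε)) : ℤ) • (List.ofFn fun i => A ((F (τ, ε)) i)).prod
      = (Equiv.Perm.sign τ.1 : ℤ) • ((∏ j : Fin n, if ε j then (-1:ℤ) else 1) •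
          (List.ofFn fun j : Fin n => if ε j
            then A (τ.1 (idx n j true)) * A (τ.1 (idx n j false))
            else A (τ.1 (idx n j false)) * A (τ.1 (idx n j true))).prod) := by
    intro ε
    have hsign : (Equiv.Perm.sign (F (τ, ε)) : ℤ)
        = (Equiv.Perm.sign τ.1 : ℤ) * ∏ j : Fin n, (if ε j then (-1:ℤ) else 1) := by
      simp only [hF, map_mul, Units.val_mul, sign_gswap]
    have hprod : (List.ofFn fun i => A ((F (τ, ε)) i)).prod
        = (List.ofFn fun j : Fin n => if ε j
            then A (τ.1 (idx n j true)) * A (τ.1 (idx n j false))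
            else A (τ.1 (idx n j false)) * A (τ.1 (idx n j true))).prod := by
      rw [pairProd n (fun i => A ((F (τ, ε)) i))]
      refine congrArg List.prod (congrArg List.ofFn (funext fun j => ?_))
      simp only [hF]
      rw [happ, happ]
      rcases Bool.dichotomy (ε j) with hε | hε <;> rw [hε] <;> simp
    rw [hsign, hprod, mul_smul]
  rw [Finset.sum_congr rfl (fun ε _ => hterm ε), ← Finset.smul_sum,
    expand n (fun j => A (τ.1 (idx n j false)) * A (τ.1 (idx n j true)))
      (fun j => A (τ.1 (idx n j true)) * A (τ.1 (idx n j false)))]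
/-- Proposition `commvolform`, abstract form: if the operators
`T_{f_j}^{(k)}` (`j = 1,...,2n`) are uniformly bounded in norm and each pairwise commutator
satisfies `‖[T_{f_i}^{(k)}, T_{f_j}^{(k)}]‖ ≤ C(f_i,f_j)/k` for all `k ≥ 1`, then the Nambu
generalized commutator satisfies `‖[T_{f₁}^{(k)},...,T_{f_{2n}}^{(k)}]‖ = O(1/kⁿ)`. -/
theorem stmt9 (n : ℕ) (hn : 0 < n)
    (H : ℕ → Type*) [∀ k, NormedRing (H k)]
    (A : ∀ k : ℕ, Fin (2 * n) → H k)
    (hbd : ∃ B : ℝ, ∀ (k : ℕ) (j : Fin (2 * n)), ‖A k j‖ ≤ B)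
    (hcomm : ∀ i j : Fin (2 * n), ∃ C : ℝ, ∀ k : ℕ, 1 ≤ k →
      ‖A k i * A k j - A k j * A k i‖ ≤ C / k) :
    (fun k : ℕ => ‖nambu (A k)‖) =O[atTop] fun k : ℕ => (1 : ℝ) / (k : ℝ) ^ n := by
  classical
  choose C hC using hcomm
  set M : ℝ := ∑ i : Fin (2*n), ∑ j : Fin (2*n), |C i j| with hM
  have hM0 : 0 ≤ M := Finset.sum_nonneg fun i _ => Finset.sum_nonneg fun j _ => abs_nonneg _
  have hCM : ∀ i j : Fin (2*n), C i j ≤ M := by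
    intro i j
    calc C i j ≤ |C i j| := le_abs_self _
    _ ≤ ∑ j' : Fin (2*n), |C i j'| :=
        Finset.single_le_sum (f := fun j' => |C i j'|)
          (fun j' _ => abs_nonneg _) (Finset.mem_univ j)
    _ ≤ M := Finset.single_le_sum (f := fun i' => ∑ j' : Fin (2*n), |C i' j'|)
        (fun i' _ => Finset.sum_nonneg fun j' _ => abs_nonneg _) (Finset.mem_univ i)
  set N : ℝ := (Fintype.card {τ : Equiv.Perm (Fin (2*n)) // ∀ j : Fin n,
      τ (idx n j false) < τ (idx n j true)} : ℝ) with hN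
  rw [isBigO_iff]
  refine ⟨N * M ^ n, ?_⟩
  filter_upwards [eventually_ge_atTop 1] with k hk
  have hk0 : (0:ℝ) < (k:ℝ) := by
    have : (0:ℕ) < k := hk
    exact_mod_cast this
  have hbound : ∀ τ : {τ : Equiv.Perm (Fin (2*n)) // ∀ j : Fin n,
      τ (idx n j false) < τ (idx n j true)},
      ‖(Equiv.Perm.sign τ.1 : ℤ) • (List.ofFn fun j : Fin n =>
        A k (τ.1 (idx n j false)) * A k (τ.1 (idx n j true)) -
          A k (τ.1 (idx n j true)) * A k (τ.1 (idx n j false))).prod‖ ≤ (M / k) ^ n := by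
    intro τ
    have hsmul : ‖(Equiv.Perm.sign τ.1 : ℤ) • (List.ofFn fun j : Fin n =>
        A k (τ.1 (idx n j false)) * A k (τ.1 (idx n j true)) -
          A k (τ.1 (idx n j true)) * A k (τ.1 (idx n j false))).prod‖
        = ‖(List.ofFn fun j : Fin n =>
        A k (τ.1 (idx n j false)) * A k (τ.1 (idx n j true)) -
          A k (τ.1 (idx n j true)) * A k (τ.1 (idx n j false))).prod‖ := by
      rcases Int.units_eq_one_or (Equiv.Perm.sign τ.1) with h | h <;> rw [h] <;> simp
    rw [hsmul]
    have hne : (List.ofFn fun j : Fin n =>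
        A k (τ.1 (idx n j false)) * A k (τ.1 (idx n j true)) -
          A k (τ.1 (idx n j true)) * A k (τ.1 (idx n j false))) ≠ [] := by
      intro h
      have := congrArg List.length h
      simp at this
      omega
    refine le_trans (List.norm_prod_le' hne) ?_
    rw [List.map_ofFn, List.prod_ofFn]
    have hstep : ∀ j : Fin n,
        ‖A k (τ.1 (idx n j false)) * A k (τ.1 (idx n j true)) -
          A k (τ.1 (idx n j true)) * A k (τ.1 (idx n j false))‖ ≤ M / k := by
      intro j
      refine le_trans (hC _ _ k hk) ?_
      exact (div_le_div_iff_of_pos_right hk0).2 (hCM _ _)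
    calc (∏ j : Fin n, ‖A k (τ.1 (idx n j false)) * A k (τ.1 (idx n j true)) -
          A k (τ.1 (idx n j true)) * A k (τ.1 (idx n j false))‖)
        ≤ ∏ _j : Fin n, (M / k) :=
          Finset.prod_le_prod (fun j _ => norm_nonneg _) (fun j _ => hstep j)
    _ = (M / k) ^ n := by rw [Finset.prod_const, Finset.card_univ, Fintype.card_fin]
  have hnorm1 : ‖(1:ℝ)/(k:ℝ)^n‖ = 1/(k:ℝ)^n := Real.norm_of_nonneg (by positivity)
  calc ‖‖nambu (A k)‖‖ = ‖nambu (A k)‖ := norm_norm _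
  _ = ‖∑ τ : {τ : Equiv.Perm (Fin (2*n)) // ∀ j : Fin n,
        τ (idx n j false) < τ (idx n j true)},
      (Equiv.Perm.sign τ.1 : ℤ) • (List.ofFn fun j : Fin n =>
        A k (τ.1 (idx n j false)) * A k (τ.1 (idx n j true)) -
          A k (τ.1 (idx n j true)) * A k (τ.1 (idx n j false))).prod‖ := by
      rw [nambu_eq n (A k)]
  _ ≤ ∑ τ : {τ : Equiv.Perm (Fin (2*n)) // ∀ j : Fin n,
        τ (idx n j false) < τ (idx n j true)},
      ‖(Equiv.Perm.sign τ.1 : ℤ) • (List.ofFn fun j : Fin n =>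
        A k (τ.1 (idx n j false)) * A k (τ.1 (idx n j true)) -
          A k (τ.1 (idx n j true)) * A k (τ.1 (idx n j false))).prod‖ :=
      norm_sum_le _ _
  _ ≤ ∑ _τ : {τ : Equiv.Perm (Fin (2*n)) // ∀ j : Fin n,
        τ (idx n j false) < τ (idx n j true)}, (M / k) ^ n :=
      Finset.sum_le_sum (fun τ _ => hbound τ)
  _ = N * (M / k) ^ n := by
      rw [Finset.sum_const, Finset.card_univ, nsmul_eq_mul, hN]
  _ = N * M ^ n * ((1:ℝ)/(k:ℝ)^n) := by rw [div_pow]; ring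
  _ = N * M ^ n * ‖(1:ℝ)/(k:ℝ)^n‖ := by rw [hnorm1]
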